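/- Let {x_k} ⊂ ℝᵈ satisfy ‖x_{k+1} - x†‖² ≤ ‖x_k - x†‖² - c₀(f(x_k) - f*) for some c₀ > 0 and some x† ∈ S = argmin f, and suppose ‖x_k - x†‖ ≤ 2 d(x_k, S) for all k and the growth bound κ [d(x,S)]^α ≤ f(x) - f* holds on a ball containing all iterates, with κ > 0 and α ≥ 2. If α = 2 then ‖x_{k+1} - x†‖² ≤ (1 - c₀κ/4)‖x_k - x†‖² for all k; if α > 2 then there is C > 0 with ‖x_k - x†‖ ≤ C (k+1)^{-1/(α-2)} for all k. -/

import Mathlib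

open Metric Set

open Real in
lemma aux_rec (C θ : ℝ) (hC : 0 < C) (hθ : 1 < θ) (Δ : ℕ → ℝ) (hΔ0 : ∀ k, 0 ≤ Δ k)
    (hrec : ∀ k, Δ (k+1) ≤ Δ k - C * Δ k ^ θ) :
    ∃ M : ℝ, 0 < M ∧ ∀ k : ℕ, Δ k ≤ M * ((k:ℝ)+1) ^ (-(1/(θ-1))) := by
  have hθ1 : 0 < θ - 1 := by linarith
  set β : ℝ := 1/(θ-1) with hβdef
  have hβ : 0 < β := by positivity
  set β' : ℝ := max β 1 with hβ'def
  have hβ'1 : 1 ≤ β' := le_max_right _ _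
  have hβ'β : β ≤ β' := le_max_left _ _
  have hβ'pos : 0 < β' := by linarith
  set K : ℝ := β' * 2 ^ (β+1) / C + 1 with hK
  have h2pow : (0:ℝ) < 2 ^ (β+1) := rpow_pos_of_pos (by norm_num) _
  have hKpos : 0 < K := by positivity
  set M : ℝ := max (Δ 0 + 1) (K ^ β) with hMdef
  have hMpos : 0 < M := lt_of_lt_of_le (by linarith [hΔ0 0]) (le_max_left _ _)
  have hβθ1 : β * (θ - 1) = 1 := by rw [hβdef]; field_simp
  have hkey : β' * 2 ^ (β+1) ≤ C * M ^ (θ-1) := by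
    have h1 : K ^ β ≤ M := le_max_right _ _
    have h2 : (K ^ β) ^ (θ-1) ≤ M ^ (θ-1) :=
      rpow_le_rpow (rpow_nonneg hKpos.le _) h1 hθ1.le
    have h3 : (K ^ β) ^ (θ-1) = K := by
      rw [← rpow_mul hKpos.le, hβθ1, rpow_one]
    have h4 : K ≤ M ^ (θ-1) := by rw [← h3]; exact h2
    have hCK : C * K = β' * 2 ^ (β+1) + C := by rw [hK]; field_simp
    nlinarith
  have step : ∀ k : ℕ, Δ k ≤ M * ((k:ℝ)+1) ^ (-β) → Δ (k+1) ≤ M * ((k:ℝ)+2) ^ (-β) := by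
    intro k hk
    set a : ℝ := (k:ℝ)+1 with ha_def
    set b : ℝ := (k:ℝ)+2 with hb_def
    have ha : 0 < a := by positivity
    have hb : 0 < b := by positivity
    have hab : a ≤ b := by show (k:ℝ)+1 ≤ (k:ℝ)+2; linarith
    have hba : b ≤ 2*a := by show (k:ℝ)+2 ≤ 2*((k:ℝ)+1); linarith [Nat.cast_nonneg (α := ℝ) k]
    by_cases hc : Δ k ≤ M * b ^ (-β)
    · have := hrec k
      have hpos : 0 ≤ C * Δ k ^ θ := mul_nonneg hC.le (rpow_nonneg (hΔ0 k) _)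
      linarith
    · push_neg at hc
      have hMb : 0 ≤ M * b ^ (-β) := by positivity
      have hpow : (M * b ^ (-β)) ^ θ ≤ Δ k ^ θ :=
        rpow_le_rpow hMb hc.le (by linarith)
      have hexpand : (M * b ^ (-β)) ^ θ = M ^ θ * b ^ (-(β+1)) := by
        rw [mul_rpow hMpos.le (rpow_nonneg hb.le _), ← rpow_mul hb.le]
        congr 2
        have : β * θ = β + 1 := by
          have : β * θ = β * (θ - 1) + β := by ring
          rw [this, hβθ1]; ring
        rw [← this]; ring
      -- subclaim 1 : a^(-β) - b^(-β) ≤ β' * a^(-(β+1))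
      have hsub1 : a ^ (-β) - b ^ (-β) ≤ β' * a ^ (-(β+1)) := by
        set t : ℝ := a / b with ht_def
        have ht0 : 0 < t := by positivity
        have ht1 : t ≤ 1 := by rw [ht_def, div_le_one hb]; exact hab
        have hbern : 1 - t ^ β ≤ β' * (1 - t) := by
          rcases le_or_gt 1 β with h1β | h1β
          · have := one_add_mul_self_le_rpow_one_add (s := t - 1) (by linarith) h1β
            simp only [add_sub_cancel] at this
            have hββ' : β * (1 - t) ≤ β' * (1 - t) :=
              mul_le_mul_of_nonneg_right hβ'β (by linarith)
            nlinarith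
          · have : t ^ (1:ℝ) ≤ t ^ β := rpow_le_rpow_of_exponent_ge ht0 ht1 h1β.le
            rw [rpow_one] at this
            nlinarith
        have htβ : t ^ β = a ^ β * b ^ (-β) := by
          rw [ht_def, div_rpow ha.le hb.le, rpow_neg hb.le, div_eq_mul_inv]
        have hid : a ^ (-β) * (1 - t ^ β) = a ^ (-β) - b ^ (-β) := by
          rw [htβ, mul_sub, mul_one]
          congr 1
          rw [← mul_assoc, ← rpow_add ha, neg_add_cancel, rpow_zero, one_mul]
        have h1t : 1 - t = 1 / b := by
          rw [ht_def]; field_simp; ring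
        have hstep : a ^ (-β) * (1 - t ^ β) ≤ a ^ (-β) * (β' * (1/b)) := by
          apply mul_le_mul_of_nonneg_left _ (rpow_nonneg ha.le _)
          rw [← h1t]; exact hbern
        have hfin : a ^ (-β) * (β' * (1/b)) ≤ β' * a ^ (-(β+1)) := by
          have h1 : a ^ (-(β+1)) = a ^ (-β) * (1/a) := by
            rw [one_div, ← rpow_neg_one a, ← rpow_add ha]; congr 1; ring
          rw [h1]
          have : a ^ (-β) * (β' * (1/b)) ≤ a ^ (-β) * (β' * (1/a)) := by
            apply mul_le_mul_of_nonneg_left _ (rpow_nonneg ha.le _)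
            apply mul_le_mul_of_nonneg_left _ hβ'pos.le
            apply one_div_le_one_div_of_le ha hab
          linarith [this]
        linarith [hid ▸ hstep]
      -- subclaim 2 : a^(-(β+1)) ≤ 2^(β+1) * b^(-(β+1))
      have hsub2 : a ^ (-(β+1)) ≤ 2 ^ (β+1) * b ^ (-(β+1)) := by
        have h1 : b ^ (β+1) ≤ 2 ^ (β+1) * a ^ (β+1) := by
          rw [← mul_rpow (by norm_num) ha.le]
          exact rpow_le_rpow hb.le hba (by positivity)
        rw [rpow_neg ha.le, rpow_neg hb.le, inv_eq_one_div, inv_eq_one_div, mul_one_div,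
          div_le_div_iff₀ (rpow_pos_of_pos ha _) (rpow_pos_of_pos hb _)]
        linarith
      have hchain : a ^ (-β) - b ^ (-β) ≤ C * M ^ (θ-1) * b ^ (-(β+1)) := by
        calc a ^ (-β) - b ^ (-β) ≤ β' * a ^ (-(β+1)) := hsub1
          _ ≤ β' * (2 ^ (β+1) * b ^ (-(β+1))) :=
              mul_le_mul_of_nonneg_left hsub2 hβ'pos.le
          _ = β' * 2 ^ (β+1) * b ^ (-(β+1)) := by ring
          _ ≤ C * M ^ (θ-1) * b ^ (-(β+1)) :=
              mul_le_mul_of_nonneg_right hkey (rpow_nonneg hb.le _)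
      have hMM : M * M ^ (θ-1) = M ^ θ := by
        nth_rewrite 1 [← rpow_one M]
        rw [← rpow_add hMpos]; ring_nf
      calc Δ (k+1) ≤ Δ k - C * Δ k ^ θ := hrec k
        _ ≤ M * a ^ (-β) - C * (M ^ θ * b ^ (-(β+1))) := by
            rw [← hexpand]
            have := mul_le_mul_of_nonneg_left hpow hC.le
            linarith
        _ ≤ M * b ^ (-β) := by
            have h5 : M * (C * M ^ (θ-1) * b ^ (-(β+1))) = C * (M ^ θ * b ^ (-(β+1))) := by
              rw [← hMM]; ring
            have h6 := mul_le_mul_of_nonneg_left hchain hMpos.le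
            linarith
  refine ⟨M, hMpos, fun k => ?_⟩
  induction k with
  | zero =>
      have h0 : Δ 0 ≤ M := le_trans (by linarith) (le_max_left (Δ 0 + 1) (K ^ β))
      rw [show ((0:ℕ):ℝ) + 1 = 1 by norm_num, Real.one_rpow, mul_one]
      exact h0
  | succ n ih =>
      have := step n ih
      push_cast
      convert this using 3
      ring


/-- Convergence rates under a Hölder growth bound: given the descent inequality
`‖x_{k+1} - x†‖² ≤ ‖x_k - x†‖² - c₀(f(x_k) - f*)`, the comparison
`‖x_k - x†‖ ≤ 2 d(x_k, S)`, and the growth bound `κ d(·,S)^α ≤ f - f*` on a ball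
containing all iterates (κ > 0, α ≥ 2): if `α = 2` one gets linear convergence with
factor `1 - c₀κ/4`, and if `α > 2` one gets `‖x_k - x†‖ ≤ C (k+1)^{-1/(α-2)}`. -/
theorem stmt_19
    {d : ℕ} (f : EuclideanSpace ℝ (Fin d) → ℝ)
    (S : Set (EuclideanSpace ℝ (Fin d)))
    (hS : S = {y | IsMinOn f Set.univ y})
    (xd : EuclideanSpace ℝ (Fin d)) (hxd : xd ∈ S)
    (c₀ : ℝ) (hc₀ : 0 < c₀)
    (x : ℕ → EuclideanSpace ℝ (Fin d))
    (hdesc : ∀ k, ‖x (k+1) - xd‖^2 ≤ ‖x k - xd‖^2 - c₀ * (f (x k) - f xd))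
    (hcmp : ∀ k, ‖x k - xd‖ ≤ 2 * infDist (x k) S)
    (κ α R : ℝ) (hκ : 0 < κ) (hα : 2 ≤ α)
    (hiter : ∀ k, x k ∈ ball xd R)
    (hgrowth : ∀ y ∈ ball xd R, κ * (infDist y S) ^ α ≤ f y - f xd) :
    (α = 2 → ∀ k, ‖x (k+1) - xd‖^2 ≤ (1 - c₀ * κ / 4) * ‖x k - xd‖^2) ∧
    (2 < α → ∃ C : ℝ, 0 < C ∧ ∀ k : ℕ,
      ‖x k - xd‖ ≤ C * ((k : ℝ) + 1) ^ (-(1/(α - 2)))) := by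
  have hα0 : (0:ℝ) ≤ α := by linarith
  have hkey : ∀ k, ‖x (k+1) - xd‖^2 ≤ ‖x k - xd‖^2 - c₀ * κ * (‖x k - xd‖/2) ^ α := by
    intro k
    have h1 := hgrowth (x k) (hiter k)
    have h2 : ‖x k - xd‖/2 ≤ infDist (x k) S := by linarith [hcmp k]
    have h3 : (‖x k - xd‖/2) ^ α ≤ infDist (x k) S ^ α :=
      Real.rpow_le_rpow (by positivity) h2 hα0
    have h4 : c₀ * κ * (‖x k - xd‖/2) ^ α ≤ c₀ * (f (x k) - f xd) := by
      calc c₀ * κ * (‖x k - xd‖/2) ^ α = c₀ * (κ * (‖x k - xd‖/2) ^ α) := by ring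
        _ ≤ c₀ * (κ * infDist (x k) S ^ α) :=
            mul_le_mul_of_nonneg_left (mul_le_mul_of_nonneg_left h3 hκ.le) hc₀.le
        _ ≤ c₀ * (f (x k) - f xd) := mul_le_mul_of_nonneg_left h1 hc₀.le
    linarith [hdesc k]
  constructor
  · intro hα2 k
    have h := hkey k
    rw [hα2, Real.rpow_two] at h
    nlinarith [h]
  · intro hα2
    set θ : ℝ := α/2 with hθdef
    have hθ : 1 < θ := by rw [hθdef]; linarith
    have h2α : (0:ℝ) < 2 ^ α := Real.rpow_pos_of_pos (by norm_num) _
    set C : ℝ := c₀ * κ / 2 ^ α with hCdef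
    have hC : 0 < C := by positivity
    have hrec : ∀ k, ‖x (k+1) - xd‖^2 ≤ ‖x k - xd‖^2 - C * (‖x k - xd‖^2) ^ θ := by
      intro k
      have hr : (0:ℝ) ≤ ‖x k - xd‖ := norm_nonneg _
      have e2 : ((‖x k - xd‖^2 : ℝ)) ^ θ = ‖x k - xd‖ ^ α := by
        rw [← Real.rpow_two, ← Real.rpow_mul hr]
        congr 1
        rw [hθdef]; ring
      have e3 : (‖x k - xd‖/2) ^ α = ‖x k - xd‖ ^ α / 2 ^ α :=
        Real.div_rpow hr (by norm_num) _
      have heq : C * (‖x k - xd‖^2) ^ θ = c₀ * κ * (‖x k - xd‖/2) ^ α := by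
        rw [e2, e3, hCdef]
        field_simp
      linarith [hkey k, heq.le, heq.ge]
    obtain ⟨M, hM, hbound⟩ :=
      aux_rec C θ hC hθ (fun k => ‖x k - xd‖^2) (fun k => sq_nonneg _) hrec
    refine ⟨Real.sqrt M, Real.sqrt_pos.mpr hM, fun k => ?_⟩
    have h1 := hbound k
    have hr : (0:ℝ) ≤ ‖x k - xd‖ := norm_nonneg _
    have hk1 : (0:ℝ) ≤ (k:ℝ)+1 := by positivity
    calc ‖x k - xd‖ = Real.sqrt (‖x k - xd‖^2) := (Real.sqrt_sq hr).symm
      _ ≤ Real.sqrt (M * ((k:ℝ)+1) ^ (-(1/(θ-1)))) := Real.sqrt_le_sqrt h1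
      _ = Real.sqrt M * Real.sqrt (((k:ℝ)+1) ^ (-(1/(θ-1)))) := Real.sqrt_mul hM.le _
      _ = Real.sqrt M * ((k:ℝ)+1) ^ (-(1/(α-2))) := by
          congr 1
          rw [Real.sqrt_eq_rpow, ← Real.rpow_mul hk1]
          congr 1
          rw [hθdef]
          have hα2' : α - 2 ≠ 0 := by intro h; apply absurd hα2; linarith [sub_eq_zero.mp h]
          field_simp
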